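/- arXiv:1407.5614 — 4 statements merged into one kernel-verified Lean document; each statement's English description precedes it below -/
import Mathlib

section
/- For any finite connected graph G, twice the weak tree-width is at least the tree-width plus one: 2·wtw(G) ≥ tw(G) + 1. Concretely, from any weak tree-decomposition of width w one can construct a tree-decomposition of width at most 2w − 1 by replacing each part S_i (i ≠ root) by S_i ∪ S_{p(i)}, where p(i) is the parent of i in a rooted version of the tree. -/
/-- A weak tree-decomposition of `G`. -/
def IsWeakTreeDecomp {V I : Type*} (G : SimpleGraph V) (T : SimpleGraph I)
    (S : I → Set V) : Prop :=
  T.IsTree ∧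
  (∀ v, ∃ i, v ∈ S i) ∧
  (∀ ⦃u v⦄, G.Adj u v → ∃ i j, T.Adj i j ∧ u ∈ S i ∪ S j ∧ v ∈ S i ∪ S j) ∧
  (∀ v, (T.induce {i | v ∈ S i}).Connected)

/-- A (usual) tree-decomposition of `G`: every edge lies inside a single bag. -/
def IsTreeDecomp {V I : Type*} (G : SimpleGraph V) (T : SimpleGraph I)
    (S : I → Set V) : Prop :=
  T.IsTree ∧
  (∀ v, ∃ i, v ∈ S i) ∧
  (∀ ⦃u v⦄, G.Adj u v → ∃ i, u ∈ S i ∧ v ∈ S i) ∧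
  (∀ v, (T.induce {i | v ∈ S i}).Connected)

/-- The weak tree-width: minimum over weak tree-decompositions of the maximum
part size. -/
noncomputable def weakTreeWidth {V : Type*} (G : SimpleGraph V) : ℕ :=
  sInf {k | ∃ (I : Type) (_ : Fintype I) (T : SimpleGraph I) (S : I → Set V),
    IsWeakTreeDecomp G T S ∧ ∀ i, (S i).ncard ≤ k}

/-- The tree-width: minimum over tree-decompositions of the maximum bag size
minus one. -/
noncomputable def treeWidth {V : Type*} (G : SimpleGraph V) : ℕ :=
  sInf {k | ∃ (I : Type) (_ : Fintype I) (T : SimpleGraph I) (S : I → Set V),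
    IsTreeDecomp G T S ∧ ∀ i, (S i).ncard ≤ k + 1}

open SimpleGraph in
lemma weak_to_strong_aux {V : Type*} {I : Type*} {G : SimpleGraph V}
    {T : SimpleGraph I} {S : I → Set V} (h : IsWeakTreeDecomp G T S) {k : ℕ}
    (hbd : ∀ i, (S i).ncard ≤ k) :
    ∃ S' : I → Set V, IsTreeDecomp G T S' ∧ ∀ i, (S' i).ncard ≤ 2 * k := by
  classical
  obtain ⟨hT, hcov, hedge, hconn⟩ := h
  have : Nonempty I := hT.isConnected.nonempty
  obtain ⟨r⟩ := this
  choose P hP hPu using fun i => hT.existsUnique_path i r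
  set p : I → I := fun i => (P i).getVert 1 with hp
  -- parent of root is root
  have hpr : p r = r := by
    have h0 : (P r) = Walk.nil := (hPu r Walk.nil Walk.IsPath.nil).symm
    rw [hp]
    simp only [h0]
    rfl
  -- parent adjacency
  have hadjp : ∀ i, i ≠ r → T.Adj i (p i) := by
    intro i hir
    have hlen : 0 < (P i).length := by
      rcases Nat.eq_zero_or_pos (P i).length with h0 | h0
      · exact absurd (Walk.eq_of_length_eq_zero h0) hir
      · exact h0
    have := (P i).adj_getVert_succ hlen
    simpa using this
  -- key: for adjacent i j, one is the parent of the other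
  have hkey : ∀ i j, T.Adj i j → p i = j ∨ p j = i := by
    intro i j hij
    by_cases hj : j ∈ (P i).support
    · left
      set Q := (P i).dropUntil j hj with hQdef
      have hQp : Q.IsPath := (hP i).dropUntil hj
      have hiQ : i ∉ Q.support := by
        intro hiQ
        have hspec := (P i).take_spec hj
        have hnd : (P i).support.Nodup := (hP i).support_nodup
        rw [← hspec, Walk.support_append] at hnd
        obtain ⟨-, -, hdisj⟩ := List.nodup_append.1 hnd
        have hhead : i ∈ ((P i).takeUntil j hj).support := Walk.start_mem_support _
        rw [Walk.support_eq_cons Q] at hiQ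
        rcases List.mem_cons.1 hiQ with hij' | htl
        · exact hij.ne hij'
        · exact hdisj _ hhead _ htl rfl
      have hcons : (Walk.cons hij Q).IsPath := hQp.cons hiQ
      have heq := hPu i _ hcons
      have : p i = (Walk.cons hij Q).getVert 1 := by rw [hp]; rw [heq]
      rw [this, Walk.getVert_cons_succ, Walk.getVert_zero]
    · right
      have hcons : (Walk.cons hij.symm (P i)).IsPath := (hP i).cons hj
      have heq := hPu j _ hcons
      have : p j = (Walk.cons hij.symm (P i)).getVert 1 := by rw [hp]; rw [heq]
      rw [this, Walk.getVert_cons_succ, Walk.getVert_zero]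
  refine ⟨fun i => S i ∪ S (p i), ⟨hT, ?_, ?_, ?_⟩, ?_⟩
  · intro v
    obtain ⟨i, hi⟩ := hcov v
    exact ⟨i, Or.inl hi⟩
  · -- edges
    intro u w huw
    obtain ⟨i, j, hij, hu, hw⟩ := hedge huw
    rcases hkey i j hij with hpi | hpj
    · refine ⟨i, ?_, ?_⟩
      · show u ∈ S i ∪ S (p i); rw [hpi]; exact hu
      · show w ∈ S i ∪ S (p i); rw [hpi]; exact hw
    · refine ⟨j, ?_, ?_⟩
      · show u ∈ S j ∪ S (p j); rw [hpj]; exact hu.elim Or.inr Or.inl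
      · show w ∈ S j ∪ S (p j); rw [hpj]; exact hw.elim Or.inr Or.inl
  · -- connectivity
    intro v
    set A : Set I := {i | v ∈ S i} with hA
    set A' : Set I := {i | v ∈ S i ∪ S (p i)} with hA'
    have hsub : ∀ {i}, i ∈ A → i ∈ A' := fun hi => Or.inl hi
    have hnonempty : A'.Nonempty := by
      obtain ⟨i, hi⟩ := hcov v
      exact ⟨i, Or.inl hi⟩
    -- homomorphism from induce A to induce A'
    let φ : T.induce A →g T.induce A' :=
      ⟨fun x => ⟨x.1, hsub x.2⟩, fun {a b} hab => hab⟩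
    -- every element of A' reaches an element of A
    have hstep : ∀ x : A', ∃ z : A', z.1 ∈ A ∧ (T.induce A').Reachable x z := by
      rintro ⟨x, hx⟩
      rcases hx with hx | hx
      · exact ⟨⟨x, Or.inl hx⟩, hx, Reachable.refl _⟩
      · by_cases hxr : x = r
        · subst hxr
          rw [hpr] at hx
          exact ⟨⟨x, Or.inl hx⟩, hx, Reachable.refl _⟩
        · have hadj : T.Adj x (p x) := hadjp x hxr
          refine ⟨⟨p x, Or.inl hx⟩, hx, Adj.reachable ?_⟩
          exact hadj
    have hne' : Nonempty ↑A' := ⟨⟨_, hnonempty.choose_spec⟩⟩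
    constructor
    rintro ⟨x, hx⟩ ⟨y, hy⟩
    obtain ⟨zx, hzxA, hzx⟩ := hstep ⟨x, hx⟩
    obtain ⟨zy, hzyA, hzy⟩ := hstep ⟨y, hy⟩
    have hmid : (T.induce A).Reachable ⟨zx.1, hzxA⟩ ⟨zy.1, hzyA⟩ :=
      (hconn v).preconnected _ _
    have hmid' := hmid.map φ
    have e1 : φ ⟨zx.1, hzxA⟩ = zx := Subtype.ext rfl
    have e2 : φ ⟨zy.1, hzyA⟩ = zy := Subtype.ext rfl
    rw [e1, e2] at hmid'
    exact hzx.trans (hmid'.trans hzy.symm)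
  · intro i
    calc (S i ∪ S (p i)).ncard ≤ (S i).ncard + (S (p i)).ncard :=
          Set.ncard_union_le _ _
      _ ≤ k + k := Nat.add_le_add (hbd i) (hbd (p i))
      _ = 2 * k := by ring

open SimpleGraph in
/-- `2·wtw(G) ≥ tw(G) + 1`. -/
theorem treeWidth_add_one_le_two_mul_weakTreeWidth {V : Type*} [Fintype V]
    (G : SimpleGraph V) (hG : G.Connected) :
    treeWidth G + 1 ≤ 2 * weakTreeWidth G := by
  classical
  have hne : Nonempty V := hG.nonempty
  -- the weak tree-width set is nonempty
  have hmem : (Fintype.card V) ∈ {k | ∃ (I : Type) (_ : Fintype I)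
      (T : SimpleGraph I) (S : I → Set V),
      IsWeakTreeDecomp G T S ∧ ∀ i, (S i).ncard ≤ k} := by
    refine ⟨Bool, inferInstance, ⊤, fun _ => Set.univ, ⟨⟨?_, ?_⟩, ?_, ?_, ?_⟩, ?_⟩
    · constructor
      intro a b
      by_cases hab : a = b
      · exact hab ▸ Reachable.refl _
      · exact Adj.reachable (by simpa using hab)
    · intro a c hc
      have h3 := hc.three_le_length
      have hnd := hc.support_nodup
      have hcard := hnd.length_le_card
      have hlen : c.support.tail.length = c.length := by
        have := c.length_support
        simp only [List.length_tail, this]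
        omega
      simp only [Fintype.card_bool] at hcard
      omega
    · intro v; exact ⟨true, trivial⟩
    · intro u w huw
      exact ⟨true, false, by simp, Or.inl trivial, Or.inl trivial⟩
    · intro v
      have hne' : Nonempty ↑{i | v ∈ (fun _ : Bool => (Set.univ : Set V)) i} :=
        ⟨⟨true, Set.mem_univ v⟩⟩
      constructor
      rintro ⟨a, _⟩ ⟨b, _⟩
      by_cases hab : a = b
      · subst hab; exact Reachable.refl _
      · exact Adj.reachable (by simpa using hab)
    · intro i
      simp [Set.ncard_univ, Nat.card_eq_fintype_card]
  have hset : {k | ∃ (I : Type) (_ : Fintype I) (T : SimpleGraph I)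
      (S : I → Set V), IsWeakTreeDecomp G T S ∧ ∀ i, (S i).ncard ≤ k}.Nonempty :=
    ⟨_, hmem⟩
  have hk : weakTreeWidth G ∈ {k | ∃ (I : Type) (_ : Fintype I)
      (T : SimpleGraph I) (S : I → Set V),
      IsWeakTreeDecomp G T S ∧ ∀ i, (S i).ncard ≤ k} := Nat.sInf_mem hset
  obtain ⟨I, _inst, T, S, hw, hbd⟩ := hk
  -- weak tree-width is at least 1
  obtain ⟨v⟩ := hne
  obtain ⟨i0, hi0⟩ := hw.2.1 v
  have hk1 : 1 ≤ weakTreeWidth G := by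
    have hpos : 0 < (S i0).ncard := (Set.ncard_pos (Set.toFinite _)).2 ⟨v, hi0⟩
    have := hbd i0
    omega
  obtain ⟨S', hTD, hS'⟩ := weak_to_strong_aux hw hbd
  have htw : treeWidth G ≤ 2 * weakTreeWidth G - 1 :=
    Nat.sInf_le ⟨I, _inst, T, S', hTD, fun i => by have := hS' i; omega⟩
  omega
end

section
/- If (T, S) is a weak tree-decomposition of G rooted at a node r, and Y_r = S_r and Y_i = S_i ∪ S_{p(i)} for every non-root node i with parent p(i), then (T, {Y_i}) is a tree-decomposition of G. -/
private lemma parent_eq {I : Type*} [DecidableEq I] {T : SimpleGraph I} (hT : T.IsTree) {r : I} {p : I → I}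
    (hp : ∀ i, i ≠ r → T.Adj i (p i) ∧ T.dist (p i) r + 1 = T.dist i r)
    {i j : I} (hir : i ≠ r) (hadj : T.Adj i j) (hd : T.dist j r + 1 = T.dist i r) :
    j = p i := by
  obtain ⟨hpadj, hpd⟩ := hp i hir
  obtain ⟨qj, hqjp, hqjl⟩ := (hT.isConnected.preconnected j r).exists_path_of_dist
  obtain ⟨qp, hqpp, hqpl⟩ := (hT.isConnected.preconnected (p i) r).exists_path_of_dist
  have hij : i ∉ qj.support := by
    intro hmem
    have h1 := SimpleGraph.dist_le (qj.dropUntil i hmem)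
    have h2 := SimpleGraph.Walk.length_dropUntil_le qj hmem
    omega
  have hip : i ∉ qp.support := by
    intro hmem
    have h1 := SimpleGraph.dist_le (qp.dropUntil i hmem)
    have h2 := SimpleGraph.Walk.length_dropUntil_le qp hmem
    omega
  have hW1 : (SimpleGraph.Walk.cons hadj qj).IsPath := hqjp.cons hij
  have hW2 : (SimpleGraph.Walk.cons hpadj qp).IsPath := hqpp.cons hip
  have heq := (hT.existsUnique_path i r).unique hW1 hW2
  have := congrArg (fun w : T.Walk i r => w.getVert 1) heq
  simpa using this

private lemma adj_parent {I : Type*} [DecidableEq I] {T : SimpleGraph I} (hT : T.IsTree) {r : I} {p : I → I}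
    (hp : ∀ i, i ≠ r → T.Adj i (p i) ∧ T.dist (p i) r + 1 = T.dist i r)
    {i j : I} (hadj : T.Adj i j) : (i ≠ r ∧ j = p i) ∨ (j ≠ r ∧ i = p j) := by
  by_cases hir : i = r
  · subst hir
    have hjr : j ≠ i := fun hh => T.irrefl (hh ▸ hadj)
    right
    refine ⟨hjr, ?_⟩
    obtain ⟨hpadj, hpd⟩ := hp j hjr
    have h1 : T.dist j i = 1 := SimpleGraph.dist_eq_one_iff_adj.2 hadj.symm
    have h0 : T.dist (p j) i = 0 := by omega
    exact (hT.isConnected.dist_eq_zero_iff.1 h0).symm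
  · by_cases hjr : j = r
    · subst hjr
      left
      refine ⟨hir, ?_⟩
      obtain ⟨hpadj, hpd⟩ := hp i hir
      have h1 : T.dist i j = 1 := SimpleGraph.dist_eq_one_iff_adj.2 hadj
      have h0 : T.dist (p i) j = 0 := by omega
      exact (hT.isConnected.dist_eq_zero_iff.1 h0).symm
    · obtain ⟨qj, hqjp, hqjl⟩ := (hT.isConnected.preconnected j r).exists_path_of_dist
      by_cases hmem : i ∈ qj.support
      · right
        refine ⟨hjr, ?_⟩
        refine parent_eq hT hp hjr hadj.symm ?_
        -- show dist i r + 1 = dist j r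
        have h1 : T.dist i r ≤ (qj.dropUntil i hmem).length := SimpleGraph.dist_le _
        have hspec := qj.take_spec hmem
        have hlen : (qj.takeUntil i hmem).length + (qj.dropUntil i hmem).length = qj.length := by
          rw [← SimpleGraph.Walk.length_append, hspec]
        have htpos : (qj.takeUntil i hmem).length ≠ 0 := by
          intro h0
          exact hadj.ne' (SimpleGraph.Walk.eq_of_length_eq_zero h0)
        obtain ⟨qi, hqil⟩ := (hT.isConnected.preconnected i r).exists_walk_length_eq_dist
        have h2 : T.dist j r ≤ T.dist i r + 1 :=
          le_trans (SimpleGraph.dist_le (SimpleGraph.Walk.cons hadj.symm qi)) (by simp [hqil])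
        omega
      · left
        refine ⟨hir, ?_⟩
        refine parent_eq hT hp hir hadj ?_
        have hW : (SimpleGraph.Walk.cons hadj qj).IsPath := hqjp.cons hmem
        obtain ⟨qi, hqip, hqil⟩ := (hT.isConnected.preconnected i r).exists_path_of_dist
        have heq := (hT.existsUnique_path i r).unique hW hqip
        have := congrArg SimpleGraph.Walk.length heq
        simp only [SimpleGraph.Walk.length_cons] at this
        omega

private lemma reachable_induce_mono {I : Type*} {T : SimpleGraph I} {A B : Set I} (hab : A ⊆ B)
    {x y : ↥A} (h : (T.induce A).Reachable x y) :
    (T.induce B).Reachable ⟨x, hab x.2⟩ ⟨y, hab y.2⟩ := by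
  let f : T.induce A →g T.induce B := ⟨Set.inclusion hab, fun {a b} hab' => hab'⟩
  exact h.map f

/-- rooting a weak tree-decomposition at `r` and replacing each
non-root bag `S i` by `S i ∪ S (p i)` (where `p i` is the parent of `i`, i.e.
the neighbour of `i` one step closer to `r`) yields a tree-decomposition. -/
theorem weakTreeDecomp_to_treeDecomp {V I : Type*} [Fintype V] [Fintype I]
    [DecidableEq I] (G : SimpleGraph V) (hG : G.Connected) (T : SimpleGraph I)
    (S : I → Set V) (h : IsWeakTreeDecomp G T S) (r : I) (p : I → I)
    (hp : ∀ i, i ≠ r → T.Adj i (p i) ∧ T.dist (p i) r + 1 = T.dist i r) :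
    IsTreeDecomp G T (fun i => if i = r then S r else S i ∪ S (p i)) := by
  obtain ⟨hT, hcov, hedge, hconn⟩ := h
  refine ⟨hT, ?_, ?_, ?_⟩
  · intro v
    obtain ⟨i, hi⟩ := hcov v
    refine ⟨i, ?_⟩
    by_cases hir : i = r
    · subst hir; simpa using hi
    · simp only [if_neg hir]; exact Or.inl hi
  · intro u v huv
    obtain ⟨i, j, hadj, hu, hv⟩ := hedge huv
    rcases adj_parent hT hp hadj with ⟨hir, hji⟩ | ⟨hjr, hij⟩
    · refine ⟨i, ?_, ?_⟩ <;> simp only [if_neg hir, ← hji] <;> assumption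
    · refine ⟨j, ?_, ?_⟩ <;> simp only [if_neg hjr, ← hij] <;>
        [exact Set.union_comm (S i) (S j) ▸ hu; exact Set.union_comm (S i) (S j) ▸ hv]
  · intro v
    set A : Set I := {i | v ∈ S i} with hAdef
    have hA := hconn v
    set B : Set I := {i | v ∈ (fun i => if i = r then S r else S i ∪ S (p i)) i} with hBdef
    have hAB : A ⊆ B := by
      intro i hi
      by_cases hir : i = r
      · subst hir; simpa [hBdef, hAdef] using hi
      · simp only [hBdef, Set.mem_setOf_eq, if_neg hir]; exact Or.inl hi
    have key : ∀ b (hb : b ∈ B), ∃ a, ∃ ha : a ∈ A,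
        (T.induce B).Reachable ⟨b, hb⟩ ⟨a, hAB ha⟩ := by
      intro b hb
      by_cases hbA : b ∈ A
      · exact ⟨b, hbA, SimpleGraph.Reachable.refl _⟩
      · by_cases hbr : b = r
        · exact absurd (by subst hbr; simpa [hBdef, hAdef] using hb) hbA
        · have hb' : v ∈ S b ∪ S (p b) := by simpa [hBdef, if_neg hbr] using hb
          have hpA : p b ∈ A := hb'.resolve_left hbA
          have hadj : (T.induce B).Adj ⟨b, hb⟩ ⟨p b, hAB hpA⟩ := (hp b hbr).1
          exact ⟨p b, hpA, hadj.reachable⟩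
    rw [SimpleGraph.connected_iff]
    refine ⟨?_, ?_⟩
    · intro x y
      obtain ⟨ax, hax, hrx⟩ := key x x.2
      obtain ⟨ay, hay, hry⟩ := key y y.2
      have hmid := reachable_induce_mono hAB (hA.preconnected ⟨ax, hax⟩ ⟨ay, hay⟩)
      exact (hrx.trans hmid).trans hry.symm
    · obtain ⟨a⟩ := hA.nonempty
      exact ⟨⟨a, hAB a.2⟩⟩
end

section
/- Let G be a finite connected graph on n vertices with maximum degree d_max, and let λ₁ be the smallest nonzero eigenvalue of the graph Laplacian. Then tw(G) + 1 ≥ n·λ₁ / (12·d_max). -/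
open Finset

/-- Dirichlet energy of `f`: sum of `(f u - f v)²` over the edges of `G`. -/
noncomputable def edgeEnergy {V : Type*} [Fintype V] [DecidableEq V]
    (G : SimpleGraph V) [DecidableRel G.Adj] (f : V → ℝ) : ℝ :=
  ∑ e ∈ G.edgeFinset,
    Sym2.lift ⟨fun u v => (f u - f v) ^ 2, fun u v => by ring⟩ e

/-- The smallest nonzero Laplacian eigenvalue, via the variational
characterization over mean-zero test functions. -/
noncomputable def lambdaOne {V : Type*} [Fintype V] [DecidableEq V]
    (G : SimpleGraph V) [DecidableRel G.Adj] : ℝ :=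
  sInf {r | ∃ f : V → ℝ, (∑ v, f v) = 0 ∧ f ≠ 0 ∧
    r = edgeEnergy G f / ∑ v, (f v) ^ 2}

open SimpleGraph

variable {I : Type} [DecidableEq I] (T : SimpleGraph I)

/-- nodes on the `j`-side of the tree edge `{i,j}` -/
def tside (i j : I) : Set I := {l | (T.deleteEdges {s(i,j)}).Reachable j l}

variable {T}

lemma bridge_not_reach (hT : T.IsAcyclic) {i j : I} (h : T.Adj i j) :
    ¬ (T.deleteEdges {s(i,j)}).Reachable i j :=
  isBridge_iff.mp ((isAcyclic_iff_forall_adj_isBridge.mp hT) h)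

lemma mem_tside_self (i j : I) : j ∈ tside T i j := Reachable.refl j

lemma not_mem_tside (hT : T.IsAcyclic) {i j : I} (h : T.Adj i j) : i ∉ tside T i j :=
  fun hr => bridge_not_reach hT h hr.symm

lemma crossing {i j : I} (hij : T.Adj i j) :
    ∀ {x y : I} (w : T.Walk x y), x ∈ tside T i j → y ∉ tside T i j →
      i ∈ w.support ∧ j ∈ w.support := by
  intro x y w
  induction w with
  | nil => intro hx hy; exact absurd hx hy
  | @cons a c d h q ih =>
    intro hx hy
    by_cases hc : c ∈ tside T i j
    · obtain ⟨h1, h2⟩ := ih hc hy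
      exact ⟨List.mem_cons_of_mem _ h1, List.mem_cons_of_mem _ h2⟩
    · have he : s(a, c) = s(i, j) := by
        by_contra hne
        have hadj : (T.deleteEdges {s(i,j)}).Adj a c :=
          SimpleGraph.deleteEdges_adj.mpr ⟨h, by simpa using hne⟩
        exact hc (hx.trans hadj.reachable)
      rw [Sym2.eq_iff] at he
      rcases he with ⟨rfl, rfl⟩ | ⟨rfl, rfl⟩
      · exact absurd (mem_tside_self a c) hc
      · exact ⟨List.mem_cons_of_mem _ q.start_mem_support, List.mem_cons_self⟩

/-- a walk in the graph with an edge deleted, lifted to the full graph -/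
lemma reach_of_deleted {e : Sym2 I} {x y : I} (h : (T.deleteEdges {e}).Reachable x y) :
    T.Reachable x y := h.mono (SimpleGraph.deleteEdges_le _)

section Decomp

variable {V : Type*} {G : SimpleGraph V} {S : I → Set V}

lemma supportWalk (hconn : ∀ v, (T.induce {i | v ∈ S i}).Connected)
    {v : V} {l l' : I} (hl : v ∈ S l) (hl' : v ∈ S l') :
    ∃ w : T.Walk l l', ∀ x ∈ w.support, v ∈ S x := by
  obtain ⟨w0⟩ := (hconn v).preconnected ⟨l, hl⟩ ⟨l', hl'⟩
  refine ⟨w0.map (SimpleGraph.Embedding.induce {i | v ∈ S i}).toHom, ?_⟩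
  intro x hx
  replace hx : x ∈ (w0.map (SimpleGraph.Embedding.induce {i | v ∈ S i}).toHom).support := hx
  rw [Walk.support_map, List.mem_map] at hx
  obtain ⟨⟨x0, hx0⟩, _, rfl⟩ := hx
  exact hx0

lemma mem_S_of_cross (hT : T.IsAcyclic)
    (hconn : ∀ v, (T.induce {i | v ∈ S i}).Connected)
    {i j : I} (hij : T.Adj i j) {v : V} {l l' : I}
    (hl : v ∈ S l) (hl' : v ∈ S l')
    (h1 : l ∈ tside T i j) (h2 : l' ∉ tside T i j) : v ∈ S i ∧ v ∈ S j := by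
  obtain ⟨w, hw⟩ := supportWalk hconn hl hl'
  obtain ⟨hi, hj⟩ := crossing hij w h1 h2
  exact ⟨hw _ hi, hw _ hj⟩

/-- vertices strictly on the `j`-side of tree edge `{i,j}` -/
def branch (T : SimpleGraph I) (S : I → Set V) (i j : I) : Set V :=
  {v | ∀ l, v ∈ S l → l ∈ tside T i j}

lemma branch_disj_Si (hT : T.IsAcyclic) {i j : I} (hij : T.Adj i j)
    {v : V} (hv : v ∈ branch T S i j) : v ∉ S i :=
  fun h => not_mem_tside hT hij (hv i h)

end Decomp

section Decomp2

variable {V : Type*} {G : SimpleGraph V} {S : I → Set V}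

lemma support_mapLe {T' : SimpleGraph I} (h : T' ≤ T) {x y : I} (p : T'.Walk x y) :
    (p.mapLe h).support = p.support := by
  rw [Walk.support_map]
  have : ⇑(Hom.ofLE h) = id := rfl
  rw [this, List.map_id]

lemma exists_branch (hT : T.IsTree)
    (hconn : ∀ v, (T.induce {i | v ∈ S i}).Connected)
    (hcov : ∀ v : V, ∃ i, v ∈ S i)
    {v : V} {i : I} (hv : v ∉ S i) : ∃ j, T.Adj i j ∧ v ∈ branch T S i j := by
  obtain ⟨l, hl⟩ := hcov v
  have hne : i ≠ l := fun h => hv (h ▸ hl)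
  obtain ⟨w⟩ := hT.isConnected.preconnected i l
  obtain ⟨p, hp⟩ : ∃ p : T.Walk i l, p.IsPath := ⟨w.toPath.1, w.toPath.2⟩
  cases p with
  | nil => exact absurd rfl hne
  | @cons _ c _ h q =>
    rw [Walk.cons_isPath_iff] at hp
    have hedge : ∀ e ∈ q.edges, e ∉ ({s(i,c)} : Set (Sym2 I)) := by
      intro e he hmem
      rw [Set.mem_singleton_iff] at hmem
      subst hmem
      exact hp.2 (q.fst_mem_support_of_mem_edges he)
    have hls : l ∈ tside T i c := ⟨q.toDeleteEdges _ hedge⟩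
    refine ⟨c, h, fun l' hl' => ?_⟩
    by_contra hl's
    exact hv (mem_S_of_cross hT.IsAcyclic hconn h hl hl' hls hl's).1

lemma tside_nested (hT : T.IsAcyclic) {i j z : I} (hij : T.Adj i j) (hjz : T.Adj j z)
    (hzi : z ≠ i) : tside T j z ⊆ tside T i j := by
  have hzj : z ∈ tside T i j := by
    have : (T.deleteEdges {s(i,j)}).Adj j z := by
      refine SimpleGraph.deleteEdges_adj.mpr ⟨hjz, ?_⟩
      rw [Set.mem_singleton_iff, Sym2.eq_iff]
      rintro (⟨rfl, rfl⟩ | ⟨-, rfl⟩)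
      · exact hij.ne rfl
      · exact hzi rfl
    exact this.reachable
  intro l hl
  by_contra hls
  obtain ⟨w⟩ := hl
  have hjw : j ∈ w.support := by
    have := (crossing hij (w.mapLe (SimpleGraph.deleteEdges_le _)) hzj hls).2
    rwa [support_mapLe] at this
  exact bridge_not_reach hT hjz ⟨(w.takeUntil j hjw).reverse⟩

end Decomp2

section Decomp3

variable {V : Type*} {G : SimpleGraph V} {S : I → Set V}

lemma not_mem_tside_other (hT : T.IsAcyclic) {i j j' : I} (hij : T.Adj i j)
    (hij' : T.Adj i j') (hjj' : j ≠ j') : j' ∉ tside T i j := by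
  intro hj'
  have : (T.deleteEdges {s(i,j)}).Adj j' i := by
    refine SimpleGraph.deleteEdges_adj.mpr ⟨hij'.symm, ?_⟩
    rw [Set.mem_singleton_iff, Sym2.eq_iff]
    rintro (⟨rfl, rfl⟩ | ⟨rfl, -⟩)
    · exact hij.ne rfl
    · exact hjj' rfl
  exact not_mem_tside hT hij (hj'.trans this.reachable)

lemma tside_disj_at (hT : T.IsAcyclic) {i j j' l : I} (hij : T.Adj i j)
    (hij' : T.Adj i j') (hjj' : j ≠ j') (hl : l ∈ tside T i j) : l ∉ tside T i j' := by
  intro hl'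
  obtain ⟨w⟩ := hl'
  have hi : i ∈ w.reverse.support := by
    have := (crossing hij ((w.reverse).mapLe (SimpleGraph.deleteEdges_le _)) hl
      (not_mem_tside_other hT hij hij' hjj')).1
    rwa [support_mapLe] at this
  rw [Walk.support_reverse, List.mem_reverse] at hi
  exact bridge_not_reach hT hij' ⟨(w.takeUntil i hi).reverse⟩

lemma tside_disj_pair (hT : T.IsAcyclic) {i j l : I} (hij : T.Adj i j)
    (hl : l ∈ tside T i j) : l ∉ tside T j i := by
  intro hl'
  have hl'' : (T.deleteEdges {s(j,i)}).Reachable i l := hl'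
  rw [Sym2.eq_swap] at hl''
  exact bridge_not_reach hT hij (hl''.trans hl.symm)

lemma tside_cover (hT : T.IsTree) {i j : I} (hij : T.Adj i j) (l : I) :
    l ∈ tside T i j ∨ l ∈ tside T j i := by
  obtain ⟨w⟩ := hT.isConnected.preconnected i l
  obtain ⟨p, hp⟩ : ∃ p : T.Walk i l, p.IsPath := ⟨w.toPath.1, w.toPath.2⟩
  cases p with
  | nil => exact Or.inr (Reachable.refl i)
  | @cons _ c _ h q =>
    rw [Walk.cons_isPath_iff] at hp
    have hedge : ∀ e' ∈ q.edges, e' ∉ ({s(i,j)} : Set (Sym2 I)) := by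
      intro e' he' hmem
      rw [Set.mem_singleton_iff] at hmem
      subst hmem
      exact hp.2 (q.fst_mem_support_of_mem_edges he')
    by_cases hcj : c = j
    · subst hcj
      exact Or.inl ⟨q.toDeleteEdges _ hedge⟩
    · right
      have hedge' : ∀ e' ∈ q.edges, e' ∉ ({s(j,i)} : Set (Sym2 I)) := by
        have : s(j,i) = s(i,j) := Sym2.eq_swap
        rw [this]; exact hedge
      have hq : (T.deleteEdges {s(j,i)}).Reachable c l := ⟨q.toDeleteEdges _ hedge'⟩
      have hic : (T.deleteEdges {s(j,i)}).Adj i c := by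
        refine SimpleGraph.deleteEdges_adj.mpr ⟨h, ?_⟩
        rw [Set.mem_singleton_iff, Sym2.eq_iff]
        rintro (⟨rfl, rfl⟩ | ⟨-, rfl⟩)
        · exact hij.ne rfl
        · exact hcj rfl
      exact hic.reachable.trans hq

lemma branch_compl (hT : T.IsTree)
    (hconn : ∀ v, (T.induce {i | v ∈ S i}).Connected)
    {i j : I} (hij : T.Adj i j) {v : V}
    (h1 : v ∉ branch T S i j) (h2 : v ∉ branch T S j i) : v ∈ S i ∧ v ∈ S j := by
  simp only [branch, Set.mem_setOf_eq, not_forall] at h1 h2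
  obtain ⟨l₁, hl₁, hs₁⟩ := h1
  obtain ⟨l₂, hl₂, hs₂⟩ := h2
  have hl₁' : l₁ ∈ tside T j i := (tside_cover hT hij l₁).resolve_left hs₁
  have h := mem_S_of_cross hT.IsAcyclic hconn hij.symm hl₁ hl₂ hl₁' hs₂
  exact ⟨h.2, h.1⟩

end Decomp3

section Centroid

variable {V : Type*} [Fintype V] {G : SimpleGraph V} {S : I → Set V} [Fintype I]

lemma branch_disj_pair_v (hT : T.IsAcyclic) (hcov : ∀ v : V, ∃ i, v ∈ S i)
    {i j : I} (hij : T.Adj i j) :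
    Disjoint (branch T S i j) (branch T S j i) := by
  rw [Set.disjoint_left]
  intro v hv hv'
  obtain ⟨l, hl⟩ := hcov v
  exact tside_disj_pair hT hij (hv l hl) (hv' l hl)

lemma branch_disj_node (hT : T.IsAcyclic) (hcov : ∀ v : V, ∃ i, v ∈ S i)
    {i j j' : I} (hij : T.Adj i j) (hij' : T.Adj i j') (hjj' : j ≠ j') :
    Disjoint (branch T S i j) (branch T S i j') := by
  rw [Set.disjoint_left]
  intro v hv hv'
  obtain ⟨l, hl⟩ := hcov v
  exact tside_disj_at hT hij hij' hjj' (hv l hl) (hv' l hl)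

lemma branch_nonadj (hT : T.IsAcyclic)
    (hedges : ∀ ⦃u v : V⦄, G.Adj u v → ∃ i, u ∈ S i ∧ v ∈ S i)
    {i j j' : I} (hij : T.Adj i j) (hij' : T.Adj i j') (hjj' : j ≠ j')
    {u w : V} (hu : u ∈ branch T S i j) (hw : w ∈ branch T S i j') : ¬ G.Adj u w := by
  intro hadj
  obtain ⟨l, hl, hl'⟩ := hedges hadj
  exact tside_disj_at hT hij hij' hjj' (hu l hl) (hw l hl')

lemma exists_centroid (hT : T.IsTree) (hcov : ∀ v : V, ∃ i, v ∈ S i) :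
    ∃ i : I, ∀ j, T.Adj i j → 2 * (branch T S i j).ncard ≤ Fintype.card V := by
  by_contra hc
  push_neg at hc
  haveI : Nonempty I := hT.isConnected.nonempty
  classical
  set D : Finset (I × I) := Finset.univ.filter
    (fun p => T.Adj p.1 p.2 ∧ Fintype.card V < 2 * (branch T S p.1 p.2).ncard) with hD
  have hDne : D.Nonempty := by
    obtain ⟨j, hj, hbj⟩ := hc (Classical.arbitrary I)
    exact ⟨(Classical.arbitrary I, j), by simp [hD, hj, hbj]⟩
  obtain ⟨p, hpD, hmin⟩ := D.exists_min_image (fun p => (tside T p.1 p.2).ncard) hDne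
  have hp2 := (Finset.mem_filter.mp hpD).2
  obtain ⟨hadj, hbig⟩ := hp2
  obtain ⟨z, hz, hbz⟩ := hc p.2
  by_cases hzi : z = p.1
  · subst hzi
    have hdisj := branch_disj_pair_v hT.IsAcyclic hcov hadj
    have hcard : (branch T S p.1 p.2).ncard + (branch T S p.2 p.1).ncard ≤ Fintype.card V := by
      rw [← Set.ncard_union_eq hdisj (Set.toFinite _) (Set.toFinite _)]
      have := Set.ncard_le_ncard (Set.subset_univ
        (branch T S p.1 p.2 ∪ branch T S p.2 p.1)) Set.finite_univ
      rwa [Set.ncard_univ, Nat.card_eq_fintype_card] at this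
    omega
  · have hsub : tside T p.2 z ⊆ tside T p.1 p.2 := tside_nested hT.IsAcyclic hadj hz hzi
    have hstrict : (tside T p.2 z).ncard < (tside T p.1 p.2).ncard := by
      refine Set.ncard_lt_ncard ⟨hsub, fun hsup => ?_⟩ (Set.toFinite _)
      exact not_mem_tside hT.IsAcyclic hz (hsup (mem_tside_self p.1 p.2))
    have hmem : (p.2, z) ∈ D := by simp [hD, hz, hbz]
    have := hmin (p.2, z) hmem
    simp only at this
    omega

end Centroid

section Analytic

variable {V : Type*} [Fintype V] [DecidableEq V] (G : SimpleGraph V) [DecidableRel G.Adj]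

lemma edgeEnergy_nonneg (f : V → ℝ) : 0 ≤ edgeEnergy G f := by
  refine Finset.sum_nonneg fun e he => ?_
  induction e using Sym2.inductionOn with
  | hf u v => simp only [Sym2.lift_mk]; positivity

lemma lambdaOne_bddBelow :
    BddBelow {r | ∃ f : V → ℝ, (∑ v, f v) = 0 ∧ f ≠ 0 ∧
      r = edgeEnergy G f / ∑ v, (f v) ^ 2} := by
  refine ⟨0, fun r hr => ?_⟩
  obtain ⟨f, -, -, rfl⟩ := hr
  exact div_nonneg (edgeEnergy_nonneg G f) (Finset.sum_nonneg fun v _ => by positivity)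

lemma lambdaOne_le {f : V → ℝ} (h0 : (∑ v, f v) = 0) (hne : f ≠ 0) :
    lambdaOne G ≤ edgeEnergy G f / ∑ v, (f v) ^ 2 :=
  csInf_le (lambdaOne_bddBelow G) ⟨f, h0, hne, rfl⟩

lemma card_filter_incident (R : Finset V) :
    ({e ∈ G.edgeFinset | ∃ r ∈ R, r ∈ e}).card ≤ R.card * G.maxDegree := by
  have hsub : {e ∈ G.edgeFinset | ∃ r ∈ R, r ∈ e} ⊆ R.biUnion (fun r => G.incidenceFinset r) := by
    intro e he
    rw [Finset.mem_filter] at he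
    obtain ⟨r, hrR, hre⟩ := he.2
    exact Finset.mem_biUnion.mpr ⟨r, hrR,
      (G.mem_incidenceFinset (v := r) e).mpr ⟨mem_edgeFinset.mp he.1, hre⟩⟩
  calc ({e ∈ G.edgeFinset | ∃ r ∈ R, r ∈ e}).card
      ≤ (R.biUnion (fun r => G.incidenceFinset r)).card := Finset.card_le_card hsub
    _ ≤ ∑ r ∈ R, (G.incidenceFinset r).card := Finset.card_biUnion_le
    _ ≤ ∑ r ∈ R, G.maxDegree := by
        refine Finset.sum_le_sum fun r _ => ?_
        rw [G.card_incidenceFinset_eq_degree]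
        exact G.degree_le_maxDegree r
    _ = R.card * G.maxDegree := by rw [Finset.sum_const, smul_eq_mul]

end Analytic

section Rayleigh

variable {V : Type*} [Fintype V] [DecidableEq V] (G : SimpleGraph V) [DecidableRel G.Adj]

lemma rayleigh (A B : Finset V) (hAB : Disjoint A B)
    (hA : 0 < A.card) (hB : 0 < B.card)
    (hnadj : ∀ u ∈ A, ∀ v ∈ B, ¬ G.Adj u v) :
    lambdaOne G * ((A.card : ℝ) * B.card * ((A.card : ℝ) + B.card)) ≤
      (((Finset.univ \ (A ∪ B)).card * G.maxDegree : ℕ) : ℝ) *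
        ((max A.card B.card : ℕ) : ℝ)^2 := by
  classical
  set f : V → ℝ := fun v => if v ∈ A then (B.card : ℝ) else if v ∈ B then -(A.card : ℝ) else 0
    with hf
  have hfA : ∀ v ∈ A, f v = (B.card : ℝ) := fun v hv => by simp [hf, hv]
  have hfB : ∀ v ∈ B, f v = -(A.card : ℝ) := fun v hv => by
    have : v ∉ A := Finset.disjoint_right.mp hAB hv
    simp [hf, hv, this]
  have hfR : ∀ v, v ∉ A → v ∉ B → f v = 0 := fun v h1 h2 => by simp [hf, h1, h2]
  set Rf : Finset V := Finset.univ \ (A ∪ B) with hRf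
  have hudisj : Disjoint (A ∪ B) Rf := Finset.disjoint_sdiff
  have huniv : (Finset.univ : Finset V) = (A ∪ B) ∪ Rf := by
    rw [hRf, Finset.union_sdiff_of_subset (Finset.subset_univ _)]
  have hsplit : ∀ g : V → ℝ, ∑ v, g v = ∑ v ∈ A, g v + ∑ v ∈ B, g v + ∑ v ∈ Rf, g v := by
    intro g
    rw [show ∑ v, g v = ∑ v ∈ (A ∪ B) ∪ Rf, g v from by rw [← huniv],
      Finset.sum_union hudisj, Finset.sum_union hAB]
  have e0 : ∀ v ∈ Rf, f v = 0 := fun v hv => by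
    rw [hRf, Finset.mem_sdiff, Finset.mem_union] at hv
    exact hfR v (fun h => hv.2 (Or.inl h)) (fun h => hv.2 (Or.inr h))
  have hsum : ∑ v, f v = 0 := by
    rw [hsplit f, Finset.sum_eq_card_nsmul hfA, Finset.sum_eq_card_nsmul hfB,
      Finset.sum_eq_zero e0, nsmul_eq_mul, nsmul_eq_mul]
    ring
  have hQ : ∑ v, (f v)^2 = (A.card : ℝ) * B.card * ((A.card : ℝ) + B.card) := by
    rw [hsplit (fun v => (f v)^2),
      Finset.sum_eq_card_nsmul (fun v hv => by rw [hfA v hv] :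
        ∀ v ∈ A, (f v)^2 = (B.card : ℝ)^2),
      Finset.sum_eq_card_nsmul (fun v hv => by rw [hfB v hv, neg_sq] :
        ∀ v ∈ B, (f v)^2 = (A.card : ℝ)^2),
      Finset.sum_eq_zero (fun v hv => by rw [e0 v hv, sq, mul_zero]),
      nsmul_eq_mul, nsmul_eq_mul]
    ring
  have hQpos : 0 < (A.card : ℝ) * B.card * ((A.card : ℝ) + B.card) := by
    have h1 : (0:ℝ) < A.card := Nat.cast_pos.mpr hA
    have h2 : (0:ℝ) < B.card := Nat.cast_pos.mpr hB
    exact mul_pos (mul_pos h1 h2) (add_pos h1 h2)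
  have hne : f ≠ 0 := by
    obtain ⟨v, hv⟩ := Finset.card_pos.mp hA
    intro h
    have := congrFun h v
    rw [hfA v hv] at this
    simp only [Pi.zero_apply] at this
    exact (Nat.cast_pos.mpr hB).ne' this
  set M : ℝ := ((max A.card B.card : ℕ) : ℝ)^2 with hM
  have hM0 : 0 ≤ M := by rw [hM]; exact sq_nonneg _
  have hfsq : ∀ v, (f v)^2 ≤ M := by
    intro v
    by_cases h1 : v ∈ A
    · rw [hfA v h1, hM]
      exact pow_le_pow_left₀ (Nat.cast_nonneg _) (Nat.cast_le.mpr (le_max_right _ _)) 2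
    by_cases h2 : v ∈ B
    · rw [hfB v h2, neg_sq, hM]
      exact pow_le_pow_left₀ (Nat.cast_nonneg _) (Nat.cast_le.mpr (le_max_left _ _)) 2
    · rw [hfR v h1 h2]
      simpa using hM0
  have key : ∀ u v : V, G.Adj u v →
      (f u - f v)^2 ≤ (if (∃ r ∈ Rf, r ∈ s(u,v)) then M else 0) := by
    intro u v hadj
    by_cases hcond : ∃ r ∈ Rf, r ∈ s(u, v)
    · rw [if_pos hcond]
      obtain ⟨r, hrRf, hre⟩ := hcond
      rw [Sym2.mem_iff] at hre
      rcases hre with rfl | rfl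
      · rw [e0 r hrRf, zero_sub, neg_sq]
        exact hfsq v
      · rw [e0 r hrRf, sub_zero]
        exact hfsq u
    · rw [if_neg hcond]
      push_neg at hcond
      have hu : u ∈ A ∪ B := by
        by_contra h
        exact (hcond u (by rw [hRf, Finset.mem_sdiff]; exact ⟨Finset.mem_univ u, h⟩))
          (Sym2.mem_mk_left u v)
      have hv : v ∈ A ∪ B := by
        by_contra h
        exact (hcond v (by rw [hRf, Finset.mem_sdiff]; exact ⟨Finset.mem_univ v, h⟩))
          (Sym2.mem_mk_right u v)
      rw [Finset.mem_union] at hu hv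
      rcases hu with hu | hu <;> rcases hv with hv | hv
      · rw [hfA u hu, hfA v hv]; simp
      · exact absurd hadj (hnadj u hu v hv)
      · exact absurd hadj.symm (hnadj v hv u hu)
      · rw [hfB u hu, hfB v hv]; simp
  have hE : edgeEnergy G f ≤ ((Rf.card * G.maxDegree : ℕ) : ℝ) * M := by
    have step1 : edgeEnergy G f ≤
        ∑ e ∈ G.edgeFinset, (if (∃ r ∈ Rf, r ∈ e) then M else 0) := by
      refine Finset.sum_le_sum fun e he => ?_
      induction e using Sym2.inductionOn with
      | hf u v =>
        rw [Sym2.lift_mk]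
        exact key u v (mem_edgeFinset.mp he)
    have step2 : ∑ e ∈ G.edgeFinset, (if (∃ r ∈ Rf, r ∈ e) then M else 0)
        = (({e ∈ G.edgeFinset | ∃ r ∈ Rf, r ∈ e}).card : ℝ) * M := by
      rw [Finset.sum_ite, Finset.sum_const, Finset.sum_const_zero, add_zero, nsmul_eq_mul]
    have step3 := card_filter_incident G Rf
    calc edgeEnergy G f ≤ _ := step1
      _ = _ := step2
      _ ≤ ((Rf.card * G.maxDegree : ℕ) : ℝ) * M := by
          apply mul_le_mul_of_nonneg_right _ hM0
          exact_mod_cast step3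
  have hlam := lambdaOne_le G hsum hne
  rw [hQ] at hlam
  exact le_trans ((le_div_iff₀ hQpos).mp hlam) hE

end Rayleigh

section FourD

variable {V : Type*} [Fintype V] [DecidableEq V] (G : SimpleGraph V) [DecidableRel G.Adj]

lemma lambdaOne_le_4d (h2 : 1 < Fintype.card V) :
    lambdaOne G ≤ 4 * (G.maxDegree : ℝ) := by
  classical
  obtain ⟨v₀, w₀, hvw⟩ := Fintype.exists_pair_of_one_lt_card h2
  set f : V → ℝ := fun v => if v = v₀ then 1 else if v = w₀ then -1 else 0 with hf
  have hfe : ∀ v, f v = (if v = v₀ then (1:ℝ) else 0) + (if v = w₀ then -1 else 0) := by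
    intro v
    by_cases h1 : v = v₀ <;> by_cases h3 : v = w₀
    · exact absurd (h1.symm.trans h3) hvw
    · simp [hf, h1, h3, hvw, Ne.symm hvw]
    · simp [hf, h1, h3, hvw, Ne.symm hvw]
    · simp [hf, h1, h3, hvw, Ne.symm hvw]
  have hsum : ∑ v, f v = 0 := by
    rw [Finset.sum_congr rfl (fun v _ => hfe v), Finset.sum_add_distrib]
    simp [Finset.sum_ite_eq']
  have hfsq : ∀ v, (f v)^2 = (if v = v₀ then (1:ℝ) else 0) + (if v = w₀ then 1 else 0) := by
    intro v
    by_cases h1 : v = v₀ <;> by_cases h3 : v = w₀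
    · exact absurd (h1.symm.trans h3) hvw
    · simp [hf, h1, h3, hvw, Ne.symm hvw]
    · simp [hf, h1, h3, hvw, Ne.symm hvw]
    · simp [hf, h1, h3, hvw, Ne.symm hvw]
  have hQ : ∑ v, (f v)^2 = 2 := by
    rw [Finset.sum_congr rfl (fun v _ => hfsq v), Finset.sum_add_distrib]
    simp [Finset.sum_ite_eq']
    norm_num
  have hne : f ≠ 0 := by
    intro h
    have := congrFun h v₀
    simp [hf] at this
  have hb : ∀ x, -1 ≤ f x ∧ f x ≤ 1 := by
    intro x
    by_cases h1 : x = v₀ <;> by_cases h3 : x = w₀ <;> simp [hf, h1, h3, hvw, Ne.symm hvw] <;> norm_num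
  have key : ∀ u v : V, G.Adj u v →
      (f u - f v)^2 ≤ (if (∃ r ∈ ({v₀, w₀} : Finset V), r ∈ s(u,v)) then (4:ℝ) else 0) := by
    intro u v _
    by_cases hcond : ∃ r ∈ ({v₀, w₀} : Finset V), r ∈ s(u, v)
    · rw [if_pos hcond]
      obtain ⟨h1, h2⟩ := hb u
      obtain ⟨h3, h4⟩ := hb v
      nlinarith
    · rw [if_neg hcond]
      push_neg at hcond
      have hu0 := hcond v₀ (Finset.mem_insert_self _ _)
      have hw0 := hcond w₀ (Finset.mem_insert_of_mem (Finset.mem_singleton_self _))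
      rw [Sym2.mem_iff] at hu0 hw0
      push_neg at hu0 hw0
      have h5 : f u = 0 := by
        show (if u = v₀ then (1:ℝ) else if u = w₀ then -1 else 0) = 0
        rw [if_neg (fun h => hu0.1 h.symm), if_neg (fun h => hw0.1 h.symm)]
      have h6 : f v = 0 := by
        show (if v = v₀ then (1:ℝ) else if v = w₀ then -1 else 0) = 0
        rw [if_neg (fun h => hu0.2 h.symm), if_neg (fun h => hw0.2 h.symm)]
      rw [h5, h6]
      norm_num
  have hE : edgeEnergy G f ≤ 8 * (G.maxDegree : ℝ) := by
    have step1 : edgeEnergy G f ≤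
        ∑ e ∈ G.edgeFinset, (if (∃ r ∈ ({v₀, w₀} : Finset V), r ∈ e) then (4:ℝ) else 0) := by
      refine Finset.sum_le_sum fun e he => ?_
      induction e using Sym2.inductionOn with
      | hf u v =>
        rw [Sym2.lift_mk]
        exact key u v (mem_edgeFinset.mp he)
    have step2 : ∑ e ∈ G.edgeFinset, (if (∃ r ∈ ({v₀, w₀} : Finset V), r ∈ e) then (4:ℝ) else 0)
        = (({e ∈ G.edgeFinset | ∃ r ∈ ({v₀, w₀} : Finset V), r ∈ e}).card : ℝ) * 4 := by
      rw [Finset.sum_ite, Finset.sum_const, Finset.sum_const_zero, add_zero, nsmul_eq_mul]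
    have step3 := card_filter_incident G ({v₀, w₀} : Finset V)
    have hcard2 : ({v₀, w₀} : Finset V).card ≤ 2 := by
      apply le_trans (Finset.card_insert_le _ _)
      simp
    have step4 : (({e ∈ G.edgeFinset | ∃ r ∈ ({v₀, w₀} : Finset V), r ∈ e}).card : ℝ)
        ≤ 2 * (G.maxDegree : ℝ) := by
      have : ({e ∈ G.edgeFinset | ∃ r ∈ ({v₀, w₀} : Finset V), r ∈ e}).card ≤ 2 * G.maxDegree :=
        le_trans step3 (Nat.mul_le_mul_right _ hcard2)
      exact_mod_cast this
    calc edgeEnergy G f ≤ _ := step1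
      _ = _ := step2
      _ ≤ 2 * (G.maxDegree : ℝ) * 4 := by
          apply mul_le_mul_of_nonneg_right step4 (by norm_num)
      _ = 8 * (G.maxDegree : ℝ) := by ring
  have hlam := lambdaOne_le G hsum hne
  rw [hQ] at hlam
  calc lambdaOne G ≤ edgeEnergy G f / 2 := hlam
    _ ≤ 8 * (G.maxDegree : ℝ) / 2 := by linarith
    _ = 4 * (G.maxDegree : ℝ) := by ring

end FourD


/-- Chandran–Subramanian: `tw(G) + 1 ≥ n·λ₁/(12·d_max)`. -/
theorem treeWidth_spectral_lower_bound {V : Type*} [Fintype V] [DecidableEq V]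
    (G : SimpleGraph V) [DecidableRel G.Adj] (hG : G.Connected) :
    (Fintype.card V : ℝ) * lambdaOne G / (12 * G.maxDegree) ≤
      (treeWidth G : ℝ) + 1 := by
  classical
  have hVne : Nonempty V := hG.nonempty
  have hnpos : 0 < Fintype.card V := Fintype.card_pos
  by_cases h1 : Fintype.card V ≤ 1
  · -- single vertex case
    have hempty : {r | ∃ f : V → ℝ, (∑ v, f v) = 0 ∧ f ≠ 0 ∧
        r = edgeEnergy G f / ∑ v, (f v) ^ 2} = ∅ := by
      ext r
      simp only [Set.mem_setOf_eq, Set.mem_empty_iff_false, iff_false]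
      rintro ⟨f, hsum, hfne, -⟩
      apply hfne
      funext v
      have huniq : ∀ w : V, w = v := fun w => Fintype.card_le_one_iff.mp h1 w v
      have huniv : (Finset.univ : Finset V) = {v} :=
        Finset.eq_singleton_iff_unique_mem.mpr ⟨Finset.mem_univ v, fun w _ => huniq w⟩
      have : ∑ w, f w = f v := by rw [huniv, Finset.sum_singleton]
      rw [this] at hsum
      simpa using hsum
    have hl0 : lambdaOne G = 0 := by
      rw [lambdaOne, hempty, Real.sInf_empty]
    rw [hl0]
    have h2 : (0:ℝ) ≤ (treeWidth G : ℝ) + 1 := by positivity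
    simpa using h2
  · push_neg at h1
    have hd1 : 1 ≤ G.maxDegree := by
      obtain ⟨v₀, w₀, hvw⟩ := Fintype.exists_pair_of_one_lt_card h1
      obtain ⟨w⟩ := hG.preconnected v₀ w₀
      cases w with
      | nil => exact absurd rfl hvw
      | cons h q =>
        have hdeg : 0 < G.degree v₀ := G.degree_pos_iff_exists_adj v₀ |>.mpr ⟨_, h⟩
        exact le_trans hdeg (G.degree_le_maxDegree v₀)
    have hdR : (0:ℝ) < (G.maxDegree : ℝ) := by exact_mod_cast hd1
    set k := treeWidth G with hk
    have hkey : (Fintype.card V : ℝ) * lambdaOne G ≤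
        12 * ((k : ℝ) + 1) * (G.maxDegree : ℝ) := by
      rcases le_or_gt (Fintype.card V) (3 * (k + 1)) with hcase | hcase
      · have h4d := lambdaOne_le_4d G h1
        calc (Fintype.card V : ℝ) * lambdaOne G
            ≤ (Fintype.card V : ℝ) * (4 * G.maxDegree) := by
              apply mul_le_mul_of_nonneg_left h4d (by positivity)
          _ ≤ ((3 * (k + 1) : ℕ) : ℝ) * (4 * G.maxDegree) := by
              apply mul_le_mul_of_nonneg_right ?_ (by positivity)
              exact_mod_cast hcase
          _ = 12 * ((k : ℝ) + 1) * G.maxDegree := by push_cast; ring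
      · -- main case : find a balanced separator from a tree decomposition
        have hSne : {m | ∃ (I : Type) (_ : Fintype I) (T : SimpleGraph I) (S : I → Set V),
            IsTreeDecomp G T S ∧ ∀ i, (S i).ncard ≤ m + 1}.Nonempty := by
          refine ⟨Fintype.card V - 1, PUnit, inferInstance, ⊥, fun _ => Set.univ,
            ⟨⟨?_, isAcyclic_bot⟩, fun v => ⟨PUnit.unit, Set.mem_univ v⟩,
             fun u v _ => ⟨PUnit.unit, Set.mem_univ u, Set.mem_univ v⟩, fun v => ?_⟩, fun i => ?_⟩
          · rw [connected_iff]
            exact ⟨fun a b => by rw [Subsingleton.elim a b], ⟨PUnit.unit⟩⟩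
          · rw [connected_iff]
            refine ⟨fun a b => by rw [Subsingleton.elim a b], ⟨⟨PUnit.unit, Set.mem_univ v⟩⟩⟩
          · rw [Set.ncard_univ, Nat.card_eq_fintype_card]
            omega
        have hmem : treeWidth G ∈ {m | ∃ (I : Type) (_ : Fintype I) (T : SimpleGraph I)
            (S : I → Set V), IsTreeDecomp G T S ∧ ∀ i, (S i).ncard ≤ m + 1} :=
          Nat.sInf_mem hSne
        obtain ⟨I, _Ifin, T, S, ⟨hT, hcov, hedges, hconn⟩, hwidth⟩ := hmem
        set n := Fintype.card V with hn
        obtain ⟨i₀, hcent⟩ := exists_centroid (S := S) hT hcov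
        set Nbrs : Finset I := Finset.univ.filter (fun j => T.Adj i₀ j) with hNbrs
        set Bf : I → Finset V := fun j => (Set.toFinite (branch T S i₀ j)).toFinset with hBf
        have hBfmem : ∀ j v, v ∈ Bf j ↔ v ∈ branch T S i₀ j := by
          intro j v; rw [hBf]; exact Set.Finite.mem_toFinset _
        have hBcard : ∀ j, (Bf j).card = (branch T S i₀ j).ncard := by
          intro j; rw [hBf]; exact (Set.ncard_eq_toFinset_card _ _).symm
        have hNadj : ∀ j ∈ Nbrs, T.Adj i₀ j := fun j hj => (Finset.mem_filter.mp hj).2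
        have hcentB : ∀ j ∈ Nbrs, 2 * (Bf j).card ≤ n := fun j hj => by
          rw [hBcard]; exact hcent j (hNadj j hj)
        set Sfin : Finset V := (Set.toFinite (S i₀)).toFinset with hSfin0
        have hSfin : Sfin.card ≤ k + 1 := by
          rw [hSfin0, ← Set.ncard_eq_toFinset_card]; exact hwidth i₀
        have hcover2 : ∀ v : V, v ∉ Sfin → ∃ j ∈ Nbrs, v ∈ Bf j := by
          intro v hv
          have hv' : v ∉ S i₀ := fun h => hv ((Set.Finite.mem_toFinset _).mpr h)
          obtain ⟨j, hadj, hbr⟩ := exists_branch hT hconn hcov hv'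
          exact ⟨j, Finset.mem_filter.mpr ⟨Finset.mem_univ j, hadj⟩, (hBfmem j v).mpr hbr⟩
        have hn_le : n ≤ (k + 1) + ∑ j ∈ Nbrs, (Bf j).card := by
          have hsub : (Finset.univ : Finset V) ⊆ Sfin ∪ Nbrs.biUnion Bf := by
            intro v _
            by_cases hv : v ∈ Sfin
            · exact Finset.mem_union_left _ hv
            · obtain ⟨j, hj, hvj⟩ := hcover2 v hv
              exact Finset.mem_union_right _ (Finset.mem_biUnion.mpr ⟨j, hj, hvj⟩)
          calc n = (Finset.univ : Finset V).card := Finset.card_univ.symm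
            _ ≤ (Sfin ∪ Nbrs.biUnion Bf).card := Finset.card_le_card hsub
            _ ≤ Sfin.card + (Nbrs.biUnion Bf).card := Finset.card_union_le _ _
            _ ≤ (k + 1) + ∑ j ∈ Nbrs, (Bf j).card :=
                Nat.add_le_add hSfin Finset.card_biUnion_le
        set P : Finset (Finset I) :=
          Nbrs.powerset.filter (fun F => n ≤ 12 * ∑ j ∈ F, (Bf j).card) with hP
        have hPne : P.Nonempty := by
          refine ⟨Nbrs, Finset.mem_filter.mpr ⟨Finset.mem_powerset_self _, ?_⟩⟩
          omega
        obtain ⟨F, hFP, hFmin⟩ := P.exists_min_image (fun F => ∑ j ∈ F, (Bf j).card) hPne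
        have hFsub : F ⊆ Nbrs := Finset.mem_powerset.mp (Finset.mem_filter.mp hFP).1
        have hFa : n ≤ 12 * ∑ j ∈ F, (Bf j).card := (Finset.mem_filter.mp hFP).2
        obtain ⟨j₀, hj₀F, hj₀pos⟩ : ∃ j ∈ F, 0 < (Bf j).card := by
          by_contra hcon
          push_neg at hcon
          have : ∑ j ∈ F, (Bf j).card = 0 :=
            Finset.sum_eq_zero (fun j hj => Nat.le_zero.mp (hcon j hj))
          omega
        have herase : ∑ j ∈ F.erase j₀, (Bf j).card + (Bf j₀).card = ∑ j ∈ F, (Bf j).card :=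
          Finset.sum_erase_add _ _ hj₀F
        have hkey2 : 12 * (∑ j ∈ F.erase j₀, (Bf j).card) < n := by
          by_contra hcon
          push_neg at hcon
          have hmemP : F.erase j₀ ∈ P := Finset.mem_filter.mpr
            ⟨Finset.mem_powerset.mpr ((Finset.erase_subset _ _).trans hFsub), hcon⟩
          have := hFmin _ hmemP
          omega
        have hj₀n : 2 * (Bf j₀).card ≤ n := hcentB j₀ (hFsub hj₀F)
        have h7 : 12 * ∑ j ∈ F, (Bf j).card < 7 * n := by omega
        set Af : Finset V := F.biUnion Bf with hAf
        set Bfn : Finset V := (Nbrs \ F).biUnion Bf with hBfn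
        have hdisjBf : ∀ j ∈ Nbrs, ∀ j' ∈ Nbrs, j ≠ j' → Disjoint (Bf j) (Bf j') := by
          intro j hj j' hj' hne
          rw [hBf]
          simp only []
          rw [Set.Finite.disjoint_toFinset]
          exact branch_disj_node hT.IsAcyclic hcov (hNadj j hj) (hNadj j' hj') hne
        have hAcard : Af.card = ∑ j ∈ F, (Bf j).card :=
          Finset.card_biUnion (fun j hj j' hj' hne =>
            hdisjBf j (hFsub hj) j' (hFsub hj') hne)
        have hBncard : Bfn.card = ∑ j ∈ Nbrs \ F, (Bf j).card :=
          Finset.card_biUnion (fun j hj j' hj' hne =>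
            hdisjBf j (Finset.mem_sdiff.mp hj).1 j' (Finset.mem_sdiff.mp hj').1 hne)
        have hsumsplit : ∑ j ∈ Nbrs \ F, (Bf j).card + ∑ j ∈ F, (Bf j).card
            = ∑ j ∈ Nbrs, (Bf j).card := Finset.sum_sdiff hFsub
        have hABdisj : Disjoint Af Bfn := by
          rw [Finset.disjoint_left]
          intro v hvA hvB
          obtain ⟨j, hjF, hvj⟩ := Finset.mem_biUnion.mp hvA
          obtain ⟨j', hj'S, hvj'⟩ := Finset.mem_biUnion.mp hvB
          have hjj' : j ≠ j' := fun h => (Finset.mem_sdiff.mp hj'S).2 (h ▸ hjF)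
          exact (Finset.disjoint_left.mp
            (hdisjBf j (hFsub hjF) j' (Finset.mem_sdiff.mp hj'S).1 hjj')) hvj hvj'
        have hnadj : ∀ u ∈ Af, ∀ v ∈ Bfn, ¬ G.Adj u v := by
          intro u hu v hv
          obtain ⟨j, hjF, huj⟩ := Finset.mem_biUnion.mp hu
          obtain ⟨j', hj'S, hvj'⟩ := Finset.mem_biUnion.mp hv
          have hjj' : j ≠ j' := fun h => (Finset.mem_sdiff.mp hj'S).2 (h ▸ hjF)
          exact branch_nonadj hT.IsAcyclic hedges (hNadj j (hFsub hjF))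
            (hNadj j' (Finset.mem_sdiff.mp hj'S).1) hjj'
            ((hBfmem j u).mp huj) ((hBfmem j' v).mp hvj')
        have hcardA : n ≤ 12 * Af.card := by omega
        have hcardB : n ≤ 12 * Bfn.card := by omega
        have hApos : 0 < Af.card := by omega
        have hBpos : 0 < Bfn.card := by omega
        have hR : (Finset.univ \ (Af ∪ Bfn)).card ≤ k + 1 := by
          have hsubR : Finset.univ \ (Af ∪ Bfn) ⊆ Sfin := by
            intro v hv
            rw [Finset.mem_sdiff, Finset.mem_union] at hv
            by_contra hvs
            obtain ⟨j, hj, hvj⟩ := hcover2 v hvs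
            by_cases hjF : j ∈ F
            · exact hv.2 (Or.inl (Finset.mem_biUnion.mpr ⟨j, hjF, hvj⟩))
            · exact hv.2 (Or.inr (Finset.mem_biUnion.mpr
                ⟨j, Finset.mem_sdiff.mpr ⟨hj, hjF⟩, hvj⟩))
          exact le_trans (Finset.card_le_card hsubR) hSfin
        have hray := rayleigh G Af Bfn hABdisj hApos hBpos hnadj
        have hnatkey : n * (max Af.card Bfn.card)^2
            ≤ 12 * (Af.card * Bfn.card * (Af.card + Bfn.card)) := by
          rcases le_total Af.card Bfn.card with hmx | hmx
          · rw [max_eq_right hmx, pow_two]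
            calc n * (Bfn.card * Bfn.card)
                ≤ (12 * Af.card) * (Bfn.card * Bfn.card) := Nat.mul_le_mul_right _ hcardA
              _ = 12 * (Af.card * Bfn.card * Bfn.card) := by ring
              _ ≤ 12 * (Af.card * Bfn.card * (Af.card + Bfn.card)) :=
                  Nat.mul_le_mul_left 12 (Nat.mul_le_mul_left _ (Nat.le_add_left _ _))
          · rw [max_eq_left hmx, pow_two]
            calc n * (Af.card * Af.card)
                ≤ (12 * Bfn.card) * (Af.card * Af.card) := Nat.mul_le_mul_right _ hcardB
              _ = 12 * (Af.card * Bfn.card * Af.card) := by ring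
              _ ≤ 12 * (Af.card * Bfn.card * (Af.card + Bfn.card)) :=
                  Nat.mul_le_mul_left 12 (Nat.mul_le_mul_left _ (Nat.le_add_right _ _))
        have hnat : n * ((Finset.univ \ (Af ∪ Bfn)).card * G.maxDegree)
              * (max Af.card Bfn.card)^2
            ≤ 12 * ((k + 1) * G.maxDegree) * (Af.card * Bfn.card * (Af.card + Bfn.card)) := by
          calc n * ((Finset.univ \ (Af ∪ Bfn)).card * G.maxDegree) * (max Af.card Bfn.card)^2
              = (n * (max Af.card Bfn.card)^2)
                  * ((Finset.univ \ (Af ∪ Bfn)).card * G.maxDegree) := by ring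
            _ ≤ (12 * (Af.card * Bfn.card * (Af.card + Bfn.card)))
                  * ((k + 1) * G.maxDegree) :=
                Nat.mul_le_mul hnatkey (Nat.mul_le_mul_right _ hR)
            _ = 12 * ((k + 1) * G.maxDegree)
                  * (Af.card * Bfn.card * (Af.card + Bfn.card)) := by ring
        have hcastR : ((n * ((Finset.univ \ (Af ∪ Bfn)).card * G.maxDegree)
              * (max Af.card Bfn.card)^2 : ℕ) : ℝ)
            ≤ ((12 * ((k + 1) * G.maxDegree)
              * (Af.card * Bfn.card * (Af.card + Bfn.card)) : ℕ) : ℝ) := Nat.cast_le.mpr hnat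
        push_cast at hcastR
        push_cast at hray
        have hQpos : (0:ℝ) < (Af.card : ℝ) * Bfn.card * ((Af.card : ℝ) + Bfn.card) := by
          have hA' : (0:ℝ) < (Af.card : ℝ) := by exact_mod_cast hApos
          have hB' : (0:ℝ) < (Bfn.card : ℝ) := by exact_mod_cast hBpos
          positivity
        have hn0 : (0:ℝ) ≤ (n : ℝ) := by positivity
        have hmul := mul_le_mul_of_nonneg_left hray hn0
        have h5 : ((n : ℝ) * lambdaOne G)
              * ((Af.card : ℝ) * Bfn.card * ((Af.card : ℝ) + Bfn.card))
            ≤ (12 * ((k : ℝ) + 1) * (G.maxDegree : ℝ))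
              * ((Af.card : ℝ) * Bfn.card * ((Af.card : ℝ) + Bfn.card)) := by
          nlinarith [hmul, hcastR]
        exact le_of_mul_le_mul_right h5 hQpos
    rw [div_le_iff₀ (by positivity)]
    calc (Fintype.card V : ℝ) * lambdaOne G
        ≤ 12 * ((k : ℝ) + 1) * G.maxDegree := hkey
      _ = ((k : ℝ) + 1) * (12 * G.maxDegree) := by ring
end

section
/- Let G = (V,E) be a finite graph, Y, Z ⊆ V disjoint and nonempty, and λ₁ the smallest nonzero Laplacian eigenvalue of G. Then λ₁ ≤ (|E| − |E(Y)| − |E(Z)|)·(1/|Y| + 1/|Z|), where E(A) denotes the set of edges with both endpoints in A. -/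
open Finset

/-- The edges of `G` with both endpoints in `A`. -/
def edgesWithin {V : Type*} (G : SimpleGraph V) (A : Set V) : Set (Sym2 V) :=
  {e | e ∈ G.edgeSet ∧ ∀ v ∈ e, v ∈ A}

/-- for disjoint nonempty `Y, Z ⊆ V`,
`λ₁ ≤ (|E| − |E(Y)| − |E(Z)|)·(1/|Y| + 1/|Z|)`. -/
theorem lambdaOne_upper_bound_two_sets {V : Type*} [Fintype V] [DecidableEq V]
    (G : SimpleGraph V) [DecidableRel G.Adj] (hG : G.Connected)
    (Y Z : Set V) (hY : Y.Nonempty) (hZ : Z.Nonempty) (hYZ : Disjoint Y Z) :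
    lambdaOne G ≤
      ((G.edgeSet.ncard : ℝ) - (edgesWithin G Y).ncard - (edgesWithin G Z).ncard) *
        (1 / (Y.ncard : ℝ) + 1 / (Z.ncard : ℝ)) := by
  classical
  set Yf := Y.toFinset with hYfdef
  set Zf := Z.toFinset with hZfdef
  set a : ℝ := (Y.ncard : ℝ) with hadef
  set b : ℝ := (Z.ncard : ℝ) with hbdef
  have hacard : a = (Yf.card : ℝ) := by
    simp [hadef, hYfdef, Set.ncard_eq_toFinset_card']
  have hbcard : b = (Zf.card : ℝ) := by
    simp [hbdef, hZfdef, Set.ncard_eq_toFinset_card']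
  have hYfne : Yf.Nonempty := by simpa [hYfdef] using hY
  have hZfne : Zf.Nonempty := by simpa [hZfdef] using hZ
  have ha : 0 < a := by
    rw [hacard]; exact_mod_cast Finset.card_pos.mpr hYfne
  have hb : 0 < b := by
    rw [hbcard]; exact_mod_cast Finset.card_pos.mpr hZfne
  set c : ℝ := 1 / a + 1 / b with hcdef
  have hc : 0 < c := by positivity
  have hdisj : Disjoint Yf Zf := by
    simpa [hYfdef, hZfdef] using Set.disjoint_toFinset.mpr hYZ
  set f : V → ℝ := fun v => if v ∈ Yf then 1 / a else if v ∈ Zf then -(1 / b) else 0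
    with hfdef
  -- values of f
  have hfY : ∀ v ∈ Yf, f v = 1 / a := fun v hv => by simp [hfdef, hv]
  have hfZ : ∀ v ∈ Zf, f v = -(1 / b) := fun v hv => by
    have hvY : v ∉ Yf := fun h => (Finset.disjoint_left.mp hdisj h) hv
    simp [hfdef, hv, hvY]
  have hf0 : ∀ v, v ∉ Yf ∪ Zf → f v = 0 := fun v hv => by
    simp only [Finset.mem_union, not_or] at hv
    simp [hfdef, hv.1, hv.2]
  -- sum of f is 0
  have hsum : ∑ v, f v = 0 := by
    have h1 : ∑ v ∈ Yf ∪ Zf, f v = ∑ v, f v :=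
      Finset.sum_subset (Finset.subset_univ _) (fun v _ hv => hf0 v hv)
    rw [← h1, Finset.sum_union hdisj, Finset.sum_congr rfl hfY,
      Finset.sum_congr rfl hfZ]
    simp only [Finset.sum_const, nsmul_eq_mul]
    rw [← hacard, ← hbcard]
    field_simp
    norm_num
  -- sum of squares is c
  have hsumsq : ∑ v, (f v) ^ 2 = c := by
    have h1 : ∑ v ∈ Yf ∪ Zf, (f v) ^ 2 = ∑ v, (f v) ^ 2 :=
      Finset.sum_subset (Finset.subset_univ _) (fun v _ hv => by rw [hf0 v hv]; ring)
    rw [← h1, Finset.sum_union hdisj]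
    have hY2 : ∑ v ∈ Yf, (f v) ^ 2 = ∑ _v ∈ Yf, (1 / a) ^ 2 :=
      Finset.sum_congr rfl (fun v hv => by rw [hfY v hv])
    have hZ2 : ∑ v ∈ Zf, (f v) ^ 2 = ∑ _v ∈ Zf, (1 / b) ^ 2 :=
      Finset.sum_congr rfl (fun v hv => by rw [hfZ v hv]; ring)
    rw [hY2, hZ2]
    simp only [Finset.sum_const, nsmul_eq_mul]
    rw [← hacard, ← hbcard, hcdef]
    field_simp
  have hfne : f ≠ 0 := by
    intro h
    obtain ⟨y, hy⟩ := hYfne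
    have h0 : f y = 0 := by rw [h]; rfl
    rw [hfY y hy] at h0
    have : (0:ℝ) < 1 / a := by positivity
    linarith
  -- bounds on f
  have hfub : ∀ v, f v ≤ 1 / a := by
    intro v
    by_cases h1 : v ∈ Yf
    · simp [hfdef, h1]
    · by_cases h2 : v ∈ Zf
      · simp only [hfdef, h1, if_false, h2, if_true]
        have : (0:ℝ) < 1 / b := by positivity
        have : (0:ℝ) < 1 / a := by positivity
        linarith
      · simp [hfdef, h1, h2]; positivity
  have hflb : ∀ v, -(1 / b) ≤ f v := by
    intro v
    by_cases h1 : v ∈ Yf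
    · simp only [hfdef, h1, if_true]
      have : (0:ℝ) < 1 / b := by positivity
      have : (0:ℝ) < 1 / a := by positivity
      linarith
    · by_cases h2 : v ∈ Zf
      · simp [hfdef, h1, h2]
      · simp only [hfdef, h1, if_false, h2, if_false]
        have : (0:ℝ) < 1 / b := by positivity
        linarith
  -- edge finsets
  set Ef := G.edgeFinset with hEfdef
  set EY := Ef.filter (fun e => ∀ v ∈ e, v ∈ Y) with hEYdef
  set EZ := Ef.filter (fun e => ∀ v ∈ e, v ∈ Z) with hEZdef
  have hEYsub : EY ⊆ Ef := Finset.filter_subset _ _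
  have hEZsub : EZ ⊆ Ef := Finset.filter_subset _ _
  have hEdisj : Disjoint EY EZ := by
    rw [Finset.disjoint_left]
    intro e heY heZ
    simp only [hEYdef, Finset.mem_filter] at heY
    simp only [hEZdef, Finset.mem_filter] at heZ
    induction e using Sym2.ind with
    | _ u v =>
      have hu : u ∈ s(u, v) := Sym2.mem_mk_left u v
      exact Set.disjoint_left.mp hYZ (heY.2 u hu) (heZ.2 u hu)
  -- ncard identifications
  have hmcard : (G.edgeSet.ncard : ℝ) = (Ef.card : ℝ) := by
    simp [hEfdef, SimpleGraph.edgeFinset, Set.ncard_eq_toFinset_card']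
  have hEYcard : ((edgesWithin G Y).ncard : ℝ) = (EY.card : ℝ) := by
    have : edgesWithin G Y = ↑EY := by
      ext e
      simp [edgesWithin, hEYdef, hEfdef, SimpleGraph.mem_edgeFinset]
    rw [this, Set.ncard_coe_finset]
  have hEZcard : ((edgesWithin G Z).ncard : ℝ) = (EZ.card : ℝ) := by
    have : edgesWithin G Z = ↑EZ := by
      ext e
      simp [edgesWithin, hEZdef, hEfdef, SimpleGraph.mem_edgeFinset]
    rw [this, Set.ncard_coe_finset]
  -- the term function
  set T : Sym2 V → ℝ :=
    Sym2.lift ⟨fun u v => (f u - f v) ^ 2, fun u v => by ring⟩ with hTdef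
  have hTnn : ∀ e, 0 ≤ T e := by
    intro e
    induction e using Sym2.ind with
    | _ u v => simp only [hTdef, Sym2.lift_mk]; positivity
  have hTub : ∀ e, T e ≤ c ^ 2 := by
    intro e
    induction e using Sym2.ind with
    | _ u v =>
      simp only [hTdef, Sym2.lift_mk]
      have h1 := hfub u
      have h2 := hfub v
      have h3 := hflb u
      have h4 := hflb v
      have h5 : f u - f v ≤ c := by rw [hcdef]; linarith
      have h6 : -c ≤ f u - f v := by rw [hcdef]; linarith
      nlinarith
  have hTzero : ∀ e ∈ EY ∪ EZ, T e = 0 := by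
    intro e he
    rw [Finset.mem_union] at he
    induction e using Sym2.ind with
    | _ u v =>
      have hu : u ∈ s(u, v) := Sym2.mem_mk_left u v
      have hv : v ∈ s(u, v) := Sym2.mem_mk_right u v
      rcases he with he | he
      · simp only [hEYdef, Finset.mem_filter] at he
        have h1 : u ∈ Yf := by rw [hYfdef, Set.mem_toFinset]; exact he.2 u hu
        have h2 : v ∈ Yf := by rw [hYfdef, Set.mem_toFinset]; exact he.2 v hv
        simp [hTdef, hfY u h1, hfY v h2]
      · simp only [hEZdef, Finset.mem_filter] at he
        have h1 : u ∈ Zf := by rw [hZfdef, Set.mem_toFinset]; exact he.2 u hu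
        have h2 : v ∈ Zf := by rw [hZfdef, Set.mem_toFinset]; exact he.2 v hv
        simp [hTdef, hfZ u h1, hfZ v h2]
  -- energy bound
  have hunion_sub : EY ∪ EZ ⊆ Ef := Finset.union_subset hEYsub hEZsub
  have hcardsdiff : ((Ef \ (EY ∪ EZ)).card : ℝ) =
      (Ef.card : ℝ) - (EY.card : ℝ) - (EZ.card : ℝ) := by
    rw [Finset.card_sdiff_of_subset hunion_sub, Finset.card_union_of_disjoint hEdisj]
    have h1 : EY.card + EZ.card ≤ Ef.card := by
      rw [← Finset.card_union_of_disjoint hEdisj]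
      exact Finset.card_le_card hunion_sub
    push_cast [Nat.cast_sub h1]
    ring
  have hE : edgeEnergy G f ≤
      ((Ef.card : ℝ) - (EY.card : ℝ) - (EZ.card : ℝ)) * c ^ 2 := by
    have hsplit : ∑ e ∈ Ef \ (EY ∪ EZ), T e + ∑ e ∈ EY ∪ EZ, T e =
        ∑ e ∈ Ef, T e := Finset.sum_sdiff hunion_sub
    have hz : ∑ e ∈ EY ∪ EZ, T e = 0 := Finset.sum_eq_zero hTzero
    have hb1 : ∑ e ∈ Ef \ (EY ∪ EZ), T e ≤
        ((Ef \ (EY ∪ EZ)).card : ℝ) * c ^ 2 := by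
      calc ∑ e ∈ Ef \ (EY ∪ EZ), T e ≤ ∑ _e ∈ Ef \ (EY ∪ EZ), c ^ 2 :=
            Finset.sum_le_sum (fun e _ => hTub e)
        _ = ((Ef \ (EY ∪ EZ)).card : ℝ) * c ^ 2 := by
            rw [Finset.sum_const, nsmul_eq_mul]
    have henergy : edgeEnergy G f = ∑ e ∈ Ef, T e := rfl
    rw [henergy, ← hsplit, hz, add_zero, ← hcardsdiff]
    exact hb1
  -- membership and bounded below
  have hmem : edgeEnergy G f / c ∈
      {r | ∃ g : V → ℝ, (∑ v, g v) = 0 ∧ g ≠ 0 ∧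
        r = edgeEnergy G g / ∑ v, (g v) ^ 2} :=
    ⟨f, hsum, hfne, by rw [hsumsq]⟩
  have hbdd : BddBelow {r | ∃ g : V → ℝ, (∑ v, g v) = 0 ∧ g ≠ 0 ∧
      r = edgeEnergy G g / ∑ v, (g v) ^ 2} := by
    refine ⟨0, fun r hr => ?_⟩
    obtain ⟨g, -, -, rfl⟩ := hr
    apply div_nonneg
    · refine Finset.sum_nonneg (fun e _ => ?_)
      induction e using Sym2.ind with
      | _ u v => simp only [Sym2.lift_mk]; positivity
    · exact Finset.sum_nonneg (fun v _ => sq_nonneg _)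
  have hle : lambdaOne G ≤ edgeEnergy G f / c := csInf_le hbdd hmem
  refine hle.trans ?_
  rw [div_le_iff₀ hc]
  calc edgeEnergy G f ≤ ((Ef.card : ℝ) - (EY.card : ℝ) - (EZ.card : ℝ)) * c ^ 2 := hE
    _ = ((G.edgeSet.ncard : ℝ) - (edgesWithin G Y).ncard - (edgesWithin G Z).ncard) *
        (1 / (Y.ncard : ℝ) + 1 / (Z.ncard : ℝ)) * c := by
      rw [hmcard, hEYcard, hEZcard, ← hadef, ← hbdef, ← hcdef]
      ring
end
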